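/- Let X_1, X_2, … be a sequence of random variables taking values in [0, l], with F_k = σ(X_1, …, X_{k−1}) and Y_k = E[X_k | F_k]. Then for any δ > 0, P[∃ n ≥ 1 : ∑_{k=1}^n X_k ≥ 3 ∑_{k=1}^n Y_k + l ln(1/δ)] ≤ δ. -/

import Mathlib

open MeasureTheory ProbabilityTheory
open scoped ENNReal NNReal

/-- The σ-algebra `σ(X 1, …, X (k-1))` generated by the past of the process. -/
def pastSigma {Ω : Type*} (X : ℕ → Ω → ℝ) (k : ℕ) : MeasurableSpace Ω :=
  ⨆ i ∈ Finset.Icc 1 (k - 1), MeasurableSpace.comap (X i) inferInstance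

def natFilt {Ω : Type*} {mΩ : MeasurableSpace Ω} (X : ℕ → Ω → ℝ)
    (hX : ∀ k, Measurable (X k)) : Filtration ℕ mΩ where
  seq n := pastSigma X (n + 1)
  mono' := by
    intro i j hij
    exact iSup₂_le fun k hk => le_iSup₂_of_le k (by simp_all; omega) le_rfl
  le' n := iSup₂_le fun i _ => (hX i).comap_le

theorem ville_aux {Ω : Type*} {mΩ : MeasurableSpace Ω} {μ : Measure Ω} [IsFiniteMeasure μ]
    {𝒢 : Filtration ℕ mΩ} {f : ℕ → Ω → ℝ} (hf : Supermartingale f 𝒢 μ)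
    (hnn : ∀ i ω, 0 ≤ f i ω) {ε : ℝ} (hε : 0 < ε) (n : ℕ) :
    ENNReal.ofReal ε * μ {ω | ∃ k ≤ n, ε ≤ f k ω} ≤ ENNReal.ofReal (∫ ω, f 0 ω ∂μ) := by
  classical
  set τ : Ω → ℕ∞ := fun ω => ((hittingBtwn f (Set.Ici ε) 0 n ω : ℕ) : ℕ∞) with hτdef
  have hτ : IsStoppingTime 𝒢 τ := Adapted.isStoppingTime_hittingBtwn hf.stronglyAdapted.adapted measurableSet_Ici
  have hτn : ∀ ω, τ ω ≤ n := fun ω => WithTop.coe_le_coe.mpr (hittingBtwn_le ω)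
  have hsvneg : stoppedValue (-f) τ = -stoppedValue f τ := rfl
  have hsv_int : Integrable (stoppedValue f τ) μ := by
    have := (hf.neg.integrable_stoppedValue hτ hτn)
    rw [hsvneg] at this
    simpa using this.neg
  have hA : MeasurableSet {ω | ∃ k ≤ n, ε ≤ f k ω} := by
    have : {ω | ∃ k ≤ n, ε ≤ f k ω} = ⋃ k, ⋃ _ : k ≤ n, {ω | ε ≤ f k ω} := by
      ext ω; simp
    rw [this]
    exact MeasurableSet.iUnion fun k => MeasurableSet.iUnion fun _ =>
      measurableSet_le measurable_const ((hf.stronglyAdapted k).measurable.le (𝒢.le k))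
  have hsv_ge : ∀ ω ∈ {ω | ∃ k ≤ n, ε ≤ f k ω}, ε ≤ stoppedValue f τ ω := by
    rintro ω ⟨k, hk, hεk⟩
    exact stoppedValue_hittingBtwn_mem ⟨k, ⟨Nat.zero_le _, hk⟩, hεk⟩
  have h1 : ε * (μ {ω | ∃ k ≤ n, ε ≤ f k ω}).toReal
      ≤ ∫ ω in {ω | ∃ k ≤ n, ε ≤ f k ω}, stoppedValue f τ ω ∂μ :=
    setIntegral_ge_of_const_le_real hA (measure_ne_top _ _) hsv_ge hsv_int.integrableOn
  have h2 : ∫ ω in {ω | ∃ k ≤ n, ε ≤ f k ω}, stoppedValue f τ ω ∂μ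
      ≤ ∫ ω, stoppedValue f τ ω ∂μ :=
    setIntegral_le_integral hsv_int (ae_of_all _ fun ω => hnn _ _)
  have h3 : ∫ ω, stoppedValue f τ ω ∂μ ≤ ∫ ω, f 0 ω ∂μ := by
    have := hf.neg.expected_stoppedValue_mono (isStoppingTime_const 𝒢 0) hτ
      (fun ω => zero_le) hτn
    rw [hsvneg] at this
    simp only [stoppedValue_const] at this
    simp only [Pi.neg_apply, integral_neg] at this
    linarith
  calc ENNReal.ofReal ε * μ {ω | ∃ k ≤ n, ε ≤ f k ω}
      = ENNReal.ofReal (ε * (μ {ω | ∃ k ≤ n, ε ≤ f k ω}).toReal) := by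
        rw [ENNReal.ofReal_mul hε.le, ENNReal.ofReal_toReal (measure_ne_top _ _)]
    _ ≤ ENNReal.ofReal (∫ ω, f 0 ω ∂μ) := ENNReal.ofReal_le_ofReal (by linarith)

/-- Anytime multiplicative concentration: for `X k ∈ [0, l]` and
`Y k = E[X k | σ(X 1, …, X (k-1))]`, for any `δ > 0`,
`P[∃ n ≥ 1, ∑_{k=1}^n X k ≥ 3 ∑_{k=1}^n Y k + l ln(1/δ)] ≤ δ`. -/
theorem anytime_multiplicative_upper
    {Ω : Type*} {mΩ : MeasurableSpace Ω} {μ : Measure Ω} [IsProbabilityMeasure μ]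
    (X : ℕ → Ω → ℝ) (l δ : ℝ) (hl : 0 < l) (hδ : δ ∈ Set.Ioo (0 : ℝ) 1)
    (hmeas : ∀ k, Measurable (X k))
    (hbdd : ∀ k, ∀ᵐ ω ∂μ, X k ω ∈ Set.Icc 0 l) :
    μ {ω | ∃ n, 1 ≤ n ∧
        3 * ∑ k ∈ Finset.Icc 1 n, (μ[X k | pastSigma X k]) ω + l * Real.log (1 / δ) ≤
          ∑ k ∈ Finset.Icc 1 n, X k ω} ≤ ENNReal.ofReal δ := by
  classical
  obtain ⟨hδ0, hδ1⟩ := hδ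
  have hl' : l ≠ 0 := hl.ne'
  set F : Filtration ℕ mΩ := natFilt X hmeas with hF
  have hFk : ∀ k, (F k : MeasurableSpace Ω) = pastSigma X (k + 1) := fun k => rfl
  set Y : ℕ → Ω → ℝ := fun k => μ[X k | pastSigma X k] with hYdef
  set M : ℕ → Ω → ℝ := fun n ω =>
    Real.exp ((∑ k ∈ Finset.Icc 1 n, X k ω - 2 * ∑ k ∈ Finset.Icc 1 n, Y k ω) / l) with hMdef
  have hM0 : ∀ n ω, 0 < M n ω := fun n ω => Real.exp_pos _
  -- past sigma algebras are below the filtration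
  have hpastle : ∀ k n, k - 1 ≤ n → pastSigma X k ≤ F n := by
    intro k n h
    show (⨆ i ∈ Finset.Icc 1 (k - 1), MeasurableSpace.comap (X i) inferInstance) ≤
      ⨆ i ∈ Finset.Icc 1 (n + 1 - 1), MeasurableSpace.comap (X i) inferInstance
    exact iSup₂_le fun i hi => le_iSup₂_of_le i
      (by simp only [Finset.mem_Icc] at *; omega) le_rfl
  -- measurability facts
  have hXF : ∀ k n, 1 ≤ k → k ≤ n → Measurable[F n] (X k) := by
    intro k n h1 h2
    have h3 : MeasurableSpace.comap (X k) inferInstance ≤ F n :=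
      le_iSup₂_of_le k (by simp only [Finset.mem_Icc]; omega) le_rfl
    exact fun s hs => h3 _ ⟨s, hs, rfl⟩
  have hYsm : ∀ k n, k ≤ n + 1 → StronglyMeasurable[F n] (Y k) := fun k n h =>
    stronglyMeasurable_condExp.mono (hpastle k n (by omega))
  have hMadp : StronglyAdapted F M := by
    intro n
    have hS : Measurable[F n] fun ω => ∑ k ∈ Finset.Icc 1 n, X k ω :=
      Finset.measurable_sum _ fun k hk => by
        simp only [Finset.mem_Icc] at hk; exact hXF k n hk.1 hk.2
    have hT : Measurable[F n] fun ω => ∑ k ∈ Finset.Icc 1 n, Y k ω :=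
      Finset.measurable_sum _ fun k hk => by
        simp only [Finset.mem_Icc] at hk; exact (hYsm k n (by omega)).measurable
    exact (Real.measurable_exp.comp (((hS.sub (hT.const_mul 2)).div_const l))).stronglyMeasurable
  -- a.e. goodness
  have hY0 : ∀ k, 0 ≤ᵐ[μ] Y k := fun k =>
    condExp_nonneg (by filter_upwards [hbdd k] with ω h using h.1)
  have hgood : ∀ᵐ ω ∂μ, ∀ k, 0 ≤ Y k ω ∧ X k ω ∈ Set.Icc 0 l := by
    rw [ae_all_iff]
    intro k
    filter_upwards [hY0 k, hbdd k] with ω h1 h2 using ⟨h1, h2⟩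
  -- integrability
  have hXint : ∀ k, Integrable (X k) μ := by
    intro k
    refine Integrable.mono' (integrable_const l) (hmeas k).aestronglyMeasurable ?_
    filter_upwards [hbdd k] with ω h
    rw [Real.norm_eq_abs, abs_of_nonneg h.1]; exact h.2
  have hMmeas : ∀ n, Measurable (M n) := fun n => ((hMadp n).measurable.le (F.le n))
  have hMint : ∀ n, Integrable (M n) μ := by
    intro n
    refine Integrable.mono' (integrable_const (Real.exp n)) (hMmeas n).aestronglyMeasurable ?_
    filter_upwards [hgood] with ω h
    rw [Real.norm_eq_abs, abs_of_pos (hM0 n ω)]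
    apply Real.exp_le_exp.mpr
    rw [div_le_iff₀ hl]
    have hSle : ∑ k ∈ Finset.Icc 1 n, X k ω ≤ n * l := by
      calc ∑ k ∈ Finset.Icc 1 n, X k ω ≤ ∑ k ∈ Finset.Icc 1 n, l :=
            Finset.sum_le_sum fun k _ => (h k).2.2
        _ = n * l := by rw [Finset.sum_const, Nat.card_Icc]; simp
    have hT0 : 0 ≤ ∑ k ∈ Finset.Icc 1 n, Y k ω :=
      Finset.sum_nonneg fun k _ => (h k).1
    linarith
  -- the supermartingale step
  have hstep : ∀ n, μ[M (n + 1) | F n] ≤ᵐ[μ] M n := by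
    intro n
    set A : Ω → ℝ := fun ω => M n ω * Real.exp (-(2 * Y (n + 1) ω) / l) with hAdef
    set B : Ω → ℝ := fun ω => Real.exp (X (n + 1) ω / l) with hBdef
    have hsum : ∀ (f : ℕ → Ω → ℝ) (ω : Ω), ∑ k ∈ Finset.Icc 1 (n + 1), f k ω
        = ∑ k ∈ Finset.Icc 1 n, f k ω + f (n + 1) ω := by
      intro f ω
      rw [← Finset.insert_Icc_right_eq_Icc_add_one (by omega), Finset.sum_insert (by simp), add_comm]
    have hAB : M (n + 1) = A * B := by
      funext ω
      show Real.exp _ = Real.exp _ * Real.exp _ * Real.exp _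
      rw [← Real.exp_add, ← Real.exp_add]
      congr 1
      rw [hsum X ω, hsum Y ω]
      field_simp
      ring
    have hAsm : StronglyMeasurable[F n] A :=
      ((hMadp n).measurable.mul (Real.measurable_exp.comp
        ((((hYsm (n + 1) n le_rfl).measurable.const_mul 2).neg).div_const l))).stronglyMeasurable
    have hABint : Integrable (A * B) μ := hAB ▸ hMint (n + 1)
    have hBint : Integrable B μ := by
      refine Integrable.mono' (integrable_const (Real.exp 1))
        (Real.measurable_exp.comp ((hmeas (n + 1)).div_const l)).aestronglyMeasurable ?_
      filter_upwards [hbdd (n + 1)] with ω h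
      rw [Real.norm_eq_abs, abs_of_pos (Real.exp_pos _)]
      exact Real.exp_le_exp.mpr ((div_le_one hl).mpr h.2)
    have hpull : μ[A * B | F n] =ᵐ[μ] A * μ[B | F n] :=
      condExp_mul_of_stronglyMeasurable_left hAsm hABint hBint
    -- pointwise convexity bound
    have hptwise : B ≤ᵐ[μ] fun ω => 1 + (2 / l) * X (n + 1) ω := by
      filter_upwards [hbdd (n + 1)] with ω h
      have ht0 : 0 ≤ X (n + 1) ω / l := div_nonneg h.1 hl.le
      have ht1 : X (n + 1) ω / l ≤ 1 := (div_le_one hl).mpr h.2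
      have hc := convexOn_exp.2 (Set.mem_univ (0 : ℝ)) (Set.mem_univ (1 : ℝ))
        (by linarith : (0:ℝ) ≤ 1 - X (n + 1) ω / l) ht0 (by ring)
      simp only [smul_eq_mul, mul_zero, mul_one, zero_add, Real.exp_zero]
        at hc
      have he : Real.exp 1 < 2.7182818286 := Real.exp_one_lt_d9
      have h2l : (2 / l) * X (n + 1) ω = 2 * (X (n + 1) ω / l) := by ring
      show Real.exp (X (n + 1) ω / l) ≤ _
      rw [h2l]
      nlinarith [mul_le_mul_of_nonneg_left he.le ht0]
    have hint2 : Integrable (fun ω => 1 + (2 / l) * X (n + 1) ω) μ :=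
      (integrable_const 1).add ((hXint (n + 1)).const_mul _)
    have hcond : μ[B | F n] ≤ᵐ[μ] μ[fun ω => 1 + (2 / l) * X (n + 1) ω | F n] :=
      condExp_mono hBint hint2 hptwise
    have hrhs : μ[fun ω => 1 + (2 / l) * X (n + 1) ω | F n]
        =ᵐ[μ] fun ω => 1 + (2 / l) * Y (n + 1) ω := by
      have h1 : (fun ω => 1 + (2 / l) * X (n + 1) ω)
          = (fun _ => (1:ℝ)) + (2 / l) • (X (n + 1)) := by funext ω; simp [smul_eq_mul]
      rw [h1]
      refine (condExp_add (integrable_const 1) ((hXint (n + 1)).smul (2 / l)) (F n)).trans ?_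
      have h2 := condExp_smul (μ := μ) (m := F n) (2 / l) (X (n + 1))
      have h3 : μ[fun _ => (1:ℝ) | F n] = fun _ => (1:ℝ) := condExp_const (F.le n) 1
      have h4 : μ[X (n + 1) | F n] = Y (n + 1) := rfl
      filter_upwards [h2] with ω hω
      simp only [Pi.add_apply, Pi.smul_apply, smul_eq_mul] at *
      rw [h3, hω, h4]
    rw [hAB]
    filter_upwards [hpull, hcond, hrhs] with ω h1 h2 h3
    have hA0 : 0 ≤ A ω := mul_nonneg (hM0 n ω).le (Real.exp_pos _).le
    have hY0' := Real.add_one_le_exp (2 * Y (n + 1) ω / l)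
    calc (μ[A * B | F n]) ω = A ω * (μ[B | F n]) ω := h1
      _ ≤ A ω * (1 + (2 / l) * Y (n + 1) ω) :=
          mul_le_mul_of_nonneg_left (le_of_le_of_eq h2 (by rw [h3])) hA0
      _ ≤ A ω * Real.exp (2 * Y (n + 1) ω / l) := by
          refine mul_le_mul_of_nonneg_left ?_ hA0
          have : (2 / l) * Y (n + 1) ω = 2 * Y (n + 1) ω / l := by ring
          linarith
      _ = M n ω := by
          show M n ω * Real.exp (-(2 * Y (n + 1) ω) / l) * Real.exp (2 * Y (n + 1) ω / l)
            = M n ω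
          rw [mul_assoc, ← Real.exp_add, neg_div, neg_add_cancel, Real.exp_zero, mul_one]
  have hsuper : Supermartingale M F μ := supermartingale_nat hMadp hMint hstep
  -- initial value
  have hM0int : ∫ ω, M 0 ω ∂μ = 1 := by
    have : M 0 = fun _ => (1:ℝ) := by
      funext ω
      show Real.exp _ = 1
      rw [Finset.Icc_eq_empty (by omega)]
      simp
    rw [this]
    simp
  -- Ville per horizon
  have hne0 : ENNReal.ofReal δ ≠ 0 := ne_of_gt (ENNReal.ofReal_pos.mpr hδ0)
  have hville : ∀ n, μ {ω | ∃ k ≤ n, (1 / δ : ℝ) ≤ M k ω} ≤ ENNReal.ofReal δ := by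
    intro n
    have h := ville_aux hsuper (fun i ω => (hM0 i ω).le) (by positivity : (0:ℝ) < 1 / δ) n
    rw [hM0int, ENNReal.ofReal_one, one_div, ENNReal.ofReal_inv_of_pos hδ0] at h
    have := (ENNReal.inv_mul_le_iff hne0 ENNReal.ofReal_ne_top).mp h
    simpa using this
  -- event inclusion
  set D : ℕ → Set Ω := fun n => {ω | ∃ k ≤ n, (1 / δ : ℝ) ≤ M k ω} with hDdef
  have hmono : Monotone D := by
    intro a b hab ω hω
    obtain ⟨k, hk, h⟩ := hω
    exact ⟨k, hk.trans hab, h⟩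
  have hsub : μ {ω | ∃ n, 1 ≤ n ∧
      3 * ∑ k ∈ Finset.Icc 1 n, (μ[X k | pastSigma X k]) ω + l * Real.log (1 / δ) ≤
        ∑ k ∈ Finset.Icc 1 n, X k ω} ≤ μ (⋃ n, D n) := by
    refine measure_mono_ae ?_
    filter_upwards [hgood] with ω h
    intro hω
    obtain ⟨n, hn1, hcond⟩ := hω
    refine Set.mem_iUnion.mpr ⟨n, n, le_rfl, ?_⟩
    have hT0 : 0 ≤ ∑ k ∈ Finset.Icc 1 n, Y k ω :=
      Finset.sum_nonneg fun k _ => (h k).1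
    have hlog : Real.log (1 / δ) ≤
        (∑ k ∈ Finset.Icc 1 n, X k ω - 2 * ∑ k ∈ Finset.Icc 1 n, Y k ω) / l := by
      rw [le_div_iff₀ hl]
      have : ∑ k ∈ Finset.Icc 1 n, (μ[X k | pastSigma X k]) ω
          = ∑ k ∈ Finset.Icc 1 n, Y k ω := rfl
      rw [this] at hcond
      nlinarith
    calc (1 / δ : ℝ) = Real.exp (Real.log (1 / δ)) := (Real.exp_log (by positivity)).symm
      _ ≤ M n ω := Real.exp_le_exp.mpr hlog
  refine hsub.trans ?_
  rw [Directed.measure_iUnion (hmono.directed_le)]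
  exact iSup_le hville
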